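/- (Lemma on the errors.) Let C > 0, α > 0 and 1 < L < 2^α, and let g₀, g₁ be homeomorphisms of S¹. Then there exists K > 0, depending only on C, α and L (in particular independent of δ), such that for every δ ∈ (0,1) and every family (f_ω)_{ω∈Σ²} of homeomorphisms of S¹ satisfying: (i) d_{C⁰}(f_ω, g_{ω₀}) ≤ δ for every ω (where ω₀ is the symbol of ω at position 0); (ii) f_ω and f_ω^{−1} are Lipschitz with constant L for every ω; (iii) d_{C⁰}(f_ω, f_{ω′}) ≤ C · d_{Σ²}(ω,ω′)^α for all ω, ω′; the following holds: for every m ∈ ℕ and all ω, ω′ ∈ Σ² with d_{Σ²}(ω,ω′) ≤ 2^{−m}, one has d_{C⁰}(f̄_m[ω], f̄_m[ω′]) ≤ K·δ^β and d_{C⁰}(f̄_{−m}[ω], f̄_{−m}[ω′]) ≤ K·δ^β, where β = 1 − (ln L)/(α ln 2). -/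

import Mathlib

open Filter Metric

noncomputable section

/-- The circle `S¹ = ℝ/ℤ`. -/
abbrev S1 := UnitAddCircle

/-- `shiftZ n ω` is the `n`-th iterate `σⁿ ω` of the Bernoulli shift `(σω)_k = ω_{k+1}`. -/
def shiftZ (n : ℤ) (ω : ℤ → Bool) : ℤ → Bool := fun k => ω (k + n)

/-- The metric on `Σ²`. -/
def dSigma (ω ω' : ℤ → Bool) : ℝ :=
  sSup ((fun k : ℕ => (2 : ℝ) ^ (-(k : ℤ))) ''
    {k : ℕ | ω (-(k : ℤ) - 1) ≠ ω' (-(k : ℤ) - 1) ∨ ω (k : ℤ) ≠ ω' (k : ℤ)})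

/-- Forward fibre compositions: `f̄_m[ω] = f_{σ^{m-1}ω} ∘ … ∘ f_{σω} ∘ f_ω`. -/
def fbarP (f : (ℤ → Bool) → (S1 ≃ₜ S1)) : ℕ → (ℤ → Bool) → (S1 ≃ₜ S1)
  | 0, _ => Homeomorph.refl S1
  | m + 1, ω => (fbarP f m ω).trans (f (shiftZ (m : ℤ) ω))

/-- Backward fibre compositions: `f̄_{-m}[ω] = f_{σ^{-m}ω}⁻¹ ∘ … ∘ f_{σ^{-1}ω}⁻¹`. -/
def fbarM (f : (ℤ → Bool) → (S1 ≃ₜ S1)) : ℕ → (ℤ → Bool) → (S1 ≃ₜ S1)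
  | 0, _ => Homeomorph.refl S1
  | m + 1, ω => (fbarM f m ω).trans (f (shiftZ (-(m : ℤ) - 1) ω)).symm

lemma dSigma_nonneg (ω ω' : ℤ → Bool) : 0 ≤ dSigma ω ω' :=
  Real.sSup_nonneg (by rintro x ⟨k, -, rfl⟩; positivity)

lemma dSigma_le (ω ω' : ℤ → Bool) (M : ℕ)
    (h : ∀ k : ℤ, -(M:ℤ) ≤ k → k < M → ω k = ω' k) :
    dSigma ω ω' ≤ (2:ℝ) ^ (-(M:ℤ)) := by
  apply Real.sSup_le
  · rintro x ⟨k, hk, rfl⟩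
    have hkM : (M:ℤ) ≤ k := by
      by_contra hlt
      push_neg at hlt
      have h1 := h (-(k:ℤ) - 1) (by omega) (by omega)
      have h2 := h k (by omega) (by omega)
      rcases hk with hk | hk
      · exact hk h1
      · exact hk h2
    exact zpow_le_zpow_right₀ (by norm_num) (by omega)
  · positivity

lemma agree_of_dSigma_le (ω ω' : ℤ → Bool) (M : ℕ)
    (h : dSigma ω ω' ≤ (2:ℝ) ^ (-(M:ℤ))) :
    ∀ k : ℤ, -(M:ℤ) ≤ k → k < M → ω k = ω' k := by
  intro k hk1 hk2
  by_contra hne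
  obtain ⟨n, hnM, hn⟩ : ∃ n : ℕ, (n:ℤ) < M ∧
      (ω (-(n:ℤ)-1) ≠ ω' (-(n:ℤ)-1) ∨ ω (n:ℤ) ≠ ω' (n:ℤ)) := by
    rcases le_or_gt 0 k with hk0 | hk0
    · refine ⟨k.toNat, by omega, Or.inr ?_⟩
      rwa [Int.toNat_of_nonneg hk0]
    · refine ⟨(-k-1).toNat, by omega, Or.inl ?_⟩
      have hh : (((-k-1).toNat : ℤ)) = -k-1 := Int.toNat_of_nonneg (by omega)
      rw [hh]
      have hx : -(-k-1) - 1 = k := by ring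
      rwa [hx]
  have hbdd : BddAbove ((fun k : ℕ => (2 : ℝ) ^ (-(k : ℤ))) ''
      {k : ℕ | ω (-(k : ℤ) - 1) ≠ ω' (-(k : ℤ) - 1) ∨ ω (k : ℤ) ≠ ω' (k : ℤ)}) := by
    refine ⟨1, ?_⟩
    rintro x ⟨j, -, rfl⟩
    exact zpow_le_one_of_nonpos₀ (by norm_num) (by omega)
  have hle := le_csSup hbdd ⟨n, hn, rfl⟩
  have hlt : (2:ℝ) ^ (-(M:ℤ)) < (2:ℝ) ^ (-(n:ℤ)) :=
    zpow_lt_zpow_right₀ (by norm_num) (by omega)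
  have : (2:ℝ)^(-(n:ℤ)) ≤ (2:ℝ)^(-(M:ℤ)) := hle.trans h
  linarith

open Finset in
lemma sum_bound_aux (C α L δ : ℝ) (hC : 0 < C) (hα : 0 < α) (hL : 1 < L)
    (hL2 : L < (2:ℝ)^α) (hδ0 : 0 < δ) (hδ1 : δ < 1) (M : ℕ) :
    ∑ j ∈ Finset.range M, L^j * min (2*δ) (C * ((2:ℝ)^(-α))^j) ≤
      (2*L/(L-1) + C*L/(1 - L*(2:ℝ)^(-α))) * δ^(1 - Real.log L/(α*Real.log 2)) := by
  set ρ : ℝ := (2:ℝ)^(-α) with hρ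
  set β : ℝ := 1 - Real.log L/(α*Real.log 2) with hβ
  have hl2 : (0:ℝ) < Real.log 2 := Real.log_pos one_lt_two
  have hρ0 : 0 < ρ := Real.rpow_pos_of_pos (by norm_num) _
  have hρ1 : ρ < 1 := Real.rpow_lt_one_of_one_lt_of_neg (by norm_num) (by linarith)
  have hL0 : (0:ℝ) < L := by linarith
  set r : ℝ := L * ρ with hr
  have hr0 : 0 < r := by positivity
  have hr1 : r < 1 := by
    have h2α : (0:ℝ) < (2:ℝ)^α := Real.rpow_pos_of_pos (by norm_num) _
    have hre : r = L / (2:ℝ)^α := by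
      rw [hr, hρ, Real.rpow_neg (by norm_num)]; ring
    rw [hre]; exact (div_lt_one h2α).mpr hL2
  set a : ℝ := Real.log (1/δ) / (α * Real.log 2) with ha
  have hlogδ : Real.log δ < 0 := Real.log_neg hδ0 hδ1
  have ha' : a = -Real.log δ / (α * Real.log 2) := by
    rw [ha, one_div, Real.log_inv]
  have ha0 : 0 ≤ a := by
    rw [ha']; apply div_nonneg (by linarith) (by positivity)
  set N : ℕ := ⌈a⌉₊ with hN
  have haN : a ≤ N := Nat.le_ceil a
  have hNa : (N:ℝ) < a + 1 := Nat.ceil_lt_add_one ha0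
  have hρN : ρ^N ≤ δ := by
    have h1 : -Real.log δ ≤ N * (α * Real.log 2) := by
      rw [ha'] at haN
      exact (div_le_iff₀ (by positivity)).mp haN
    have : ρ^N = (2:ℝ) ^ (-α * N) := by
      rw [hρ, ← Real.rpow_natCast ((2:ℝ)^(-α)) N, ← Real.rpow_mul (by norm_num)]
    rw [this]
    calc (2:ℝ) ^ (-α * (N:ℝ)) ≤ (2:ℝ) ^ (Real.logb 2 δ) := by
          apply Real.rpow_le_rpow_left_iff (by norm_num : (1:ℝ) < 2) |>.mpr
          rw [Real.logb, le_div_iff₀ hl2]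
          nlinarith
      _ = δ := Real.rpow_logb (by norm_num) (by norm_num) hδ0
  have hLN : L^N ≤ L * δ^(β-1) := by
    have h1 : L^N = L ^ (N:ℝ) := (Real.rpow_natCast L N).symm
    have h2 : L ^ (N:ℝ) ≤ L ^ (a+1) :=
      (Real.rpow_le_rpow_left_iff hL).mpr hNa.le
    have h3 : L ^ (a+1) = L^a * L := by
      rw [Real.rpow_add hL0, Real.rpow_one]
    have h4 : L^a = δ^(β-1) := by
      rw [Real.rpow_def_of_pos hL0, Real.rpow_def_of_pos hδ0, ha', hβ]
      congr 1
      field_simp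
      ring
    calc L^N = L^(N:ℝ) := h1
      _ ≤ L^(a+1) := h2
      _ = L^a * L := h3
      _ = δ^(β-1) * L := by rw [h4]
      _ = L * δ^(β-1) := mul_comm _ _
  have hβδ : δ * δ^(β-1) = δ^β := by
    nth_rewrite 1 [← Real.rpow_one δ]
    rw [← Real.rpow_add hδ0]; ring_nf
  have hrN : r^N ≤ L * δ^β := by
    calc r^N = L^N * ρ^N := mul_pow L ρ N
      _ ≤ (L * δ^(β-1)) * δ := by
          apply mul_le_mul hLN hρN (le_of_lt (pow_pos hρ0 N)) (by positivity)
      _ = L * (δ * δ^(β-1)) := by ring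
      _ = L * δ^β := by rw [hβδ]
  have hterm : ∀ j ∈ Finset.range M, L^j * min (2*δ) (C * ρ^j) ≤
      (if j < N then 2*δ*L^j else 0) + (if N ≤ j then C * r^j else 0) := by
    intro j _
    rcases lt_or_ge j N with hj | hj
    · rw [if_pos hj, if_neg (not_le.mpr hj), add_zero]
      calc L^j * min (2*δ) (C * ρ^j) ≤ L^j * (2*δ) :=
            mul_le_mul_of_nonneg_left (min_le_left _ _) (by positivity)
        _ = 2*δ*L^j := by ring
    · rw [if_neg (not_lt.mpr hj), if_pos hj, zero_add]
      calc L^j * min (2*δ) (C * ρ^j) ≤ L^j * (C * ρ^j) :=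
            mul_le_mul_of_nonneg_left (min_le_right _ _) (by positivity)
        _ = C * r^j := by rw [hr, mul_pow]; ring
  have hsplit := Finset.sum_le_sum hterm
  rw [Finset.sum_add_distrib] at hsplit
  have hpart1 : ∑ j ∈ range M, (if j < N then 2*δ*L^j else 0) ≤ 2*δ*(L^N/(L-1)) := by
    rw [← Finset.sum_filter]
    calc ∑ j ∈ (range M).filter (· < N), 2*δ*L^j
        ≤ ∑ j ∈ range N, 2*δ*L^j := by
          apply Finset.sum_le_sum_of_subset_of_nonneg
          · intro j hj; simp only [Finset.mem_filter, Finset.mem_range] at hj ⊢; exact hj.2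
          · intros; positivity
      _ = 2*δ * ∑ j ∈ range N, L^j := by rw [Finset.mul_sum]
      _ ≤ 2*δ*(L^N/(L-1)) := by
          apply mul_le_mul_of_nonneg_left _ (by positivity)
          rw [geom_sum_eq hL.ne' N]
          gcongr
          · linarith
  have hpart2 : ∑ j ∈ range M, (if N ≤ j then C*r^j else 0) ≤ C * r^N * (1/(1-r)) := by
    rw [← Finset.sum_filter]
    calc ∑ j ∈ (range M).filter (fun j => N ≤ j), C*r^j
        ≤ ∑ j ∈ Finset.Ico N (N+M), C*r^j := by
          apply Finset.sum_le_sum_of_subset_of_nonneg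
          · intro j hj; simp only [Finset.mem_filter, Finset.mem_range, Finset.mem_Ico] at hj ⊢
            omega
          · intros; positivity
      _ = ∑ i ∈ range M, C*r^(N+i) := by
          rw [Finset.sum_Ico_eq_sum_range]; simp
      _ = C * r^N * ∑ i ∈ range M, r^i := by
          rw [Finset.mul_sum]; apply Finset.sum_congr rfl; intro i _; rw [pow_add]; ring
      _ ≤ C * r^N * (1/(1-r)) := by
          apply mul_le_mul_of_nonneg_left _ (by positivity)
          rw [geom_sum_eq hr1.ne M]
          have heq : (r^M-1)/(r-1) = (1-r^M)/(1-r) := by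
            rw [← neg_div_neg_eq]; ring_nf
          rw [heq]
          gcongr
          · have : (0:ℝ) ≤ r^M := le_of_lt (pow_pos hr0 M)
            linarith
  calc ∑ j ∈ range M, L^j * min (2*δ) (C * ρ^j)
      ≤ _ := hsplit
    _ ≤ 2*δ*(L^N/(L-1)) + C*r^N*(1/(1-r)) := add_le_add hpart1 hpart2
    _ ≤ 2*δ*((L*δ^(β-1))/(L-1)) + C*(L*δ^β)*(1/(1-r)) := by
        have hinv : (0:ℝ) ≤ 1/(1-r) := le_of_lt (by apply div_pos one_pos; linarith)
        gcongr <;> first | exact hLN | exact hrN | exact hinv | linarith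
    _ = (2*L/(L-1)) * (δ * δ^(β-1)) + (C*L/(1-r)) * δ^β := by ring
    _ = (2*L/(L-1) + C*L/(1-r)) * δ^β := by rw [hβδ]; ring

/-- Lemma on the errors (Lemma 7): there is `K`, depending only on `C`, `α`, `L`, such
that for every `δ ∈ (0,1)` and any family of circle homeomorphisms `f_ω` that is
`δ`-close in `C⁰` to `g_{ω₀}`, `L`-Lipschitz in both directions, and Hölder in `ω`,
sequences `ω, ω'` with `d(ω,ω') ≤ 2^{-m}` have `f̄_{±m}` within `Kδ^β` in `C⁰`, where
`β = 1 - ln L / (α ln 2)`. -/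
theorem lemma_on_errors
    (C α L : ℝ) (hC : 0 < C) (hα : 0 < α) (hL : 1 < L) (hL2 : L < (2 : ℝ) ^ α)
    (g₀ g₁ : S1 ≃ₜ S1) :
    ∃ K : ℝ, 0 < K ∧
      ∀ δ : ℝ, 0 < δ → δ < 1 →
        ∀ f : (ℤ → Bool) → (S1 ≃ₜ S1),
          (∀ ω (φ : S1), dist (f ω φ) ((if ω 0 then g₁ else g₀) φ) ≤ δ) →
          (∀ ω, LipschitzWith (Real.toNNReal L) (f ω) ∧
            LipschitzWith (Real.toNNReal L) (f ω).symm) →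
          (∀ ω ω' (φ : S1), dist (f ω φ) (f ω' φ) ≤ C * dSigma ω ω' ^ α) →
          ∀ (m : ℕ) (ω ω' : ℤ → Bool), dSigma ω ω' ≤ (2 : ℝ) ^ (-(m : ℤ)) →
            (∀ φ : S1, dist (fbarP f m ω φ) (fbarP f m ω' φ) ≤
              K * δ ^ (1 - Real.log L / (α * Real.log 2))) ∧
            (∀ φ : S1, dist (fbarM f m ω φ) (fbarM f m ω' φ) ≤
              K * δ ^ (1 - Real.log L / (α * Real.log 2))) := by
  have hL0 : (0:ℝ) < L := by linarith
  set ρ : ℝ := (2:ℝ)^(-α) with hρdef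
  have hρ0 : (0:ℝ) < ρ := Real.rpow_pos_of_pos (by norm_num) _
  have hρ1 : ρ < 1 := Real.rpow_lt_one_of_one_lt_of_neg (by norm_num) (by linarith)
  have h1r : 0 < 1 - L*ρ := by
    have h2α : (0:ℝ) < (2:ℝ)^α := Real.rpow_pos_of_pos (by norm_num) _
    have hre : L*ρ = L / (2:ℝ)^α := by
      rw [hρdef, Real.rpow_neg (by norm_num)]; ring
    have : L*ρ < 1 := by rw [hre]; exact (div_lt_one h2α).mpr hL2
    linarith
  set X : ℝ := 2*L/(L-1) + C*L/(1 - L*ρ) with hX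
  have hX0 : 0 < X := by
    have hA : 0 < 2*L/(L-1) := by apply div_pos (by linarith); linarith
    have hB : 0 < C*L/(1 - L*ρ) := by apply div_pos (by positivity); linarith
    rw [hX]; linarith
  refine ⟨L * X + 1, by positivity, ?_⟩
  intro δ hδ0 hδ1 f h1 h2 h3 M ω ω' hd
  set β : ℝ := 1 - Real.log L / (α * Real.log 2) with hβ
  have hδβ : 0 < δ^β := Real.rpow_pos_of_pos hδ0 _
  set e : ℕ → ℝ := fun j => min (2*δ) (C * ρ^j) with hedef
  have he0 : ∀ j, 0 ≤ e j := fun j => le_min (by positivity) (by positivity)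
  have emono : ∀ i j : ℕ, i ≤ j → e j ≤ e i := by
    intro i j hij
    apply min_le_min le_rfl
    apply mul_le_mul_of_nonneg_left _ hC.le
    exact pow_le_pow_of_le_one hρ0.le hρ1.le hij
  have agree : ∀ k : ℤ, -(M:ℤ) ≤ k → k < M → ω k = ω' k := agree_of_dSigma_le ω ω' M hd
  have hq : ∀ n : ℕ, ((2:ℝ) ^ (-(n:ℤ))) ^ α = ρ^n := by
    intro n
    rw [hρdef, ← Real.rpow_intCast 2 (-(n:ℤ)), ← Real.rpow_natCast ((2:ℝ)^(-α)) n,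
        ← Real.rpow_mul (by norm_num : (0:ℝ) ≤ 2), ← Real.rpow_mul (by norm_num : (0:ℝ) ≤ 2)]
    congr 1
    push_cast
    ring
  have step : ∀ (ν ν' : ℤ → Bool) (n : ℕ), ν 0 = ν' 0 → dSigma ν ν' ≤ (2:ℝ)^(-(n:ℤ)) →
      ∀ φ : S1, dist (f ν φ) (f ν' φ) ≤ e n := by
    intro ν ν' n hsym hds φ
    apply le_min
    · have e1 := h1 ν φ
      have e2 := h1 ν' φ
      rw [hsym] at e1
      calc dist (f ν φ) (f ν' φ)
          ≤ dist (f ν φ) ((if ν' 0 then g₁ else g₀) φ)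
            + dist (f ν' φ) ((if ν' 0 then g₁ else g₀) φ) := dist_triangle_right _ _ _
        _ ≤ δ + δ := add_le_add e1 e2
        _ = 2*δ := by ring
    · calc dist (f ν φ) (f ν' φ) ≤ C * dSigma ν ν' ^ α := h3 ν ν' φ
        _ ≤ C * ((2:ℝ)^(-(n:ℤ)))^α := by
            apply mul_le_mul_of_nonneg_left _ hC.le
            exact Real.rpow_le_rpow (dSigma_nonneg ν ν') hds hα.le
        _ = C * ρ^n := by rw [hq n]
  have hdsF : ∀ m : ℕ, m < M →
      dSigma (shiftZ (m:ℤ) ω) (shiftZ (m:ℤ) ω') ≤ (2:ℝ)^(-((M - m : ℕ):ℤ)) := by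
    intro m hm
    apply dSigma_le
    intro k hk1 hk2
    show ω (k + m) = ω' (k + m)
    exact agree _ (by omega) (by omega)
  have hdsB : ∀ m : ℕ, m < M →
      dSigma (shiftZ (-(m:ℤ)-1) ω) (shiftZ (-(m:ℤ)-1) ω') ≤ (2:ℝ)^(-((M - m - 1 : ℕ):ℤ)) := by
    intro m hm
    apply dSigma_le
    intro k hk1 hk2
    show ω (k + (-(m:ℤ)-1)) = ω' (k + (-(m:ℤ)-1))
    exact agree _ (by omega) (by omega)
  have step_f : ∀ m : ℕ, m < M → ∀ φ : S1,
      dist (f (shiftZ (m:ℤ) ω) φ) (f (shiftZ (m:ℤ) ω') φ) ≤ e (M - m - 1) := by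
    intro m hm φ
    have hsym : (shiftZ (m:ℤ) ω) 0 = (shiftZ (m:ℤ) ω') 0 := by
      show ω (0 + m) = ω' (0 + m)
      exact agree _ (by omega) (by omega)
    exact (step _ _ (M - m) hsym (hdsF m hm) φ).trans (emono _ _ (by omega))
  have step_b0 : ∀ m : ℕ, m < M → ∀ φ : S1,
      dist (f (shiftZ (-(m:ℤ)-1) ω) φ) (f (shiftZ (-(m:ℤ)-1) ω') φ) ≤ e (M - m - 1) := by
    intro m hm φ
    have hsym : (shiftZ (-(m:ℤ)-1) ω) 0 = (shiftZ (-(m:ℤ)-1) ω') 0 := by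
      show ω (0 + (-(m:ℤ)-1)) = ω' (0 + (-(m:ℤ)-1))
      exact agree _ (by omega) (by omega)
    exact step _ _ (M - m - 1) hsym (hdsB m hm) φ
  have step_b : ∀ m : ℕ, m < M → ∀ ψ : S1,
      dist ((f (shiftZ (-(m:ℤ)-1) ω)).symm ψ) ((f (shiftZ (-(m:ℤ)-1) ω')).symm ψ)
        ≤ L * e (M - m - 1) := by
    intro m hm ψ
    set F := f (shiftZ (-(m:ℤ)-1) ω) with hF
    set G := f (shiftZ (-(m:ℤ)-1) ω') with hG
    have hLip := (h2 (shiftZ (-(m:ℤ)-1) ω')).2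
    calc dist (F.symm ψ) (G.symm ψ)
        = dist (G.symm (G (F.symm ψ))) (G.symm ψ) := by rw [Homeomorph.symm_apply_apply]
      _ ≤ (Real.toNNReal L) * dist (G (F.symm ψ)) ψ := hLip.dist_le_mul _ _
      _ = L * dist (G (F.symm ψ)) ψ := by rw [Real.coe_toNNReal L hL0.le]
      _ = L * dist (G (F.symm ψ)) (F (F.symm ψ)) := by rw [Homeomorph.apply_symm_apply]
      _ = L * dist (F (F.symm ψ)) (G (F.symm ψ)) := by rw [dist_comm]
      _ ≤ L * e (M - m - 1) :=
          mul_le_mul_of_nonneg_left (step_b0 m hm (F.symm ψ)) hL0.le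
  have main_f : ∀ m : ℕ, m ≤ M → ∀ φ : S1,
      dist (fbarP f m ω φ) (fbarP f m ω' φ) ≤
        ∑ j ∈ Finset.range m, L^j * e (M - m + j) := by
    intro m
    induction m with
    | zero => intro _ φ; simp [fbarP]
    | succ m ih =>
      intro hm1 φ
      have hm : m < M := hm1
      have ihb := ih hm.le
      have hx : fbarP f (m+1) ω φ = f (shiftZ (m:ℤ) ω) (fbarP f m ω φ) := rfl
      have hy : fbarP f (m+1) ω' φ = f (shiftZ (m:ℤ) ω') (fbarP f m ω' φ) := rfl
      rw [hx, hy]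
      have hLip := (h2 (shiftZ (m:ℤ) ω)).1.dist_le_mul (fbarP f m ω φ) (fbarP f m ω' φ)
      rw [Real.coe_toNNReal L hL0.le] at hLip
      have hs := step_f m hm (fbarP f m ω' φ)
      have hsum : ∑ j ∈ Finset.range (m+1), L^j * e (M - (m+1) + j)
          = L * (∑ j ∈ Finset.range m, L^j * e (M - m + j)) + e (M - m - 1) := by
        rw [Finset.sum_range_succ', Finset.mul_sum]
        congr 1
        · apply Finset.sum_congr rfl
          intro j hj
          have h1 : M - (m+1) + (j+1) = M - m + j := by omega
          rw [h1]; ring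
        · have h2' : M - (m+1) + 0 = M - m - 1 := by omega
          rw [h2']; simp
      rw [hsum]
      calc dist (f (shiftZ (m:ℤ) ω) (fbarP f m ω φ)) (f (shiftZ (m:ℤ) ω') (fbarP f m ω' φ))
          ≤ dist (f (shiftZ (m:ℤ) ω) (fbarP f m ω φ)) (f (shiftZ (m:ℤ) ω) (fbarP f m ω' φ))
            + dist (f (shiftZ (m:ℤ) ω) (fbarP f m ω' φ))
              (f (shiftZ (m:ℤ) ω') (fbarP f m ω' φ)) := dist_triangle _ _ _
        _ ≤ L * dist (fbarP f m ω φ) (fbarP f m ω' φ) + e (M - m - 1) := add_le_add hLip hs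
        _ ≤ L * (∑ j ∈ Finset.range m, L^j * e (M - m + j)) + e (M - m - 1) := by
            exact add_le_add (mul_le_mul_of_nonneg_left (ihb φ) hL0.le) le_rfl
  have main_b : ∀ m : ℕ, m ≤ M → ∀ φ : S1,
      dist (fbarM f m ω φ) (fbarM f m ω' φ) ≤
        ∑ j ∈ Finset.range m, L^j * (L * e (M - m + j)) := by
    intro m
    induction m with
    | zero => intro _ φ; simp [fbarM]
    | succ m ih =>
      intro hm1 φ
      have hm : m < M := hm1
      have ihb := ih hm.le
      have hx : fbarM f (m+1) ω φ = (f (shiftZ (-(m:ℤ)-1) ω)).symm (fbarM f m ω φ) := rfl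
      have hy : fbarM f (m+1) ω' φ = (f (shiftZ (-(m:ℤ)-1) ω')).symm (fbarM f m ω' φ) := rfl
      rw [hx, hy]
      have hLip := (h2 (shiftZ (-(m:ℤ)-1) ω)).2.dist_le_mul (fbarM f m ω φ) (fbarM f m ω' φ)
      rw [Real.coe_toNNReal L hL0.le] at hLip
      have hs := step_b m hm (fbarM f m ω' φ)
      have hsum : ∑ j ∈ Finset.range (m+1), L^j * (L * e (M - (m+1) + j))
          = L * (∑ j ∈ Finset.range m, L^j * (L * e (M - m + j))) + L * e (M - m - 1) := by
        rw [Finset.sum_range_succ', Finset.mul_sum]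
        congr 1
        · apply Finset.sum_congr rfl
          intro j hj
          have h1 : M - (m+1) + (j+1) = M - m + j := by omega
          rw [h1]; ring
        · have h2' : M - (m+1) + 0 = M - m - 1 := by omega
          rw [h2']; simp
      rw [hsum]
      calc dist ((f (shiftZ (-(m:ℤ)-1) ω)).symm (fbarM f m ω φ))
            ((f (shiftZ (-(m:ℤ)-1) ω')).symm (fbarM f m ω' φ))
          ≤ dist ((f (shiftZ (-(m:ℤ)-1) ω)).symm (fbarM f m ω φ))
              ((f (shiftZ (-(m:ℤ)-1) ω)).symm (fbarM f m ω' φ))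
            + dist ((f (shiftZ (-(m:ℤ)-1) ω)).symm (fbarM f m ω' φ))
              ((f (shiftZ (-(m:ℤ)-1) ω')).symm (fbarM f m ω' φ)) := dist_triangle _ _ _
        _ ≤ L * dist (fbarM f m ω φ) (fbarM f m ω' φ) + L * e (M - m - 1) := add_le_add hLip hs
        _ ≤ L * (∑ j ∈ Finset.range m, L^j * (L * e (M - m + j))) + L * e (M - m - 1) := by
            exact add_le_add (mul_le_mul_of_nonneg_left (ihb φ) hL0.le) le_rfl
  have hsb := sum_bound_aux C α L δ hC hα hL hL2 hδ0 hδ1 M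
  have hsum_e : ∑ j ∈ Finset.range M, L^j * e (M - M + j) = ∑ j ∈ Finset.range M,
      L^j * min (2*δ) (C * ((2:ℝ)^(-α))^j) := by
    apply Finset.sum_congr rfl
    intro j _
    have : M - M + j = j := by omega
    rw [this, hedef]
  constructor
  · intro φ
    calc dist (fbarP f M ω φ) (fbarP f M ω' φ)
        ≤ ∑ j ∈ Finset.range M, L^j * e (M - M + j) := main_f M le_rfl φ
      _ = ∑ j ∈ Finset.range M, L^j * min (2*δ) (C * ((2:ℝ)^(-α))^j) := hsum_e
      _ ≤ X * δ^β := hsb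
      _ ≤ (L * X + 1) * δ^β := by
          apply mul_le_mul_of_nonneg_right _ hδβ.le
          nlinarith
  · intro φ
    have hLsum : ∑ j ∈ Finset.range M, L^j * (L * e (M - M + j))
        = L * ∑ j ∈ Finset.range M, L^j * e (M - M + j) := by
      rw [Finset.mul_sum]
      apply Finset.sum_congr rfl
      intro j _; ring
    calc dist (fbarM f M ω φ) (fbarM f M ω' φ)
        ≤ ∑ j ∈ Finset.range M, L^j * (L * e (M - M + j)) := main_b M le_rfl φ
      _ = L * ∑ j ∈ Finset.range M, L^j * e (M - M + j) := hLsum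
      _ = L * ∑ j ∈ Finset.range M, L^j * min (2*δ) (C * ((2:ℝ)^(-α))^j) := by rw [hsum_e]
      _ ≤ L * (X * δ^β) := mul_le_mul_of_nonneg_left hsb hL0.le
      _ ≤ (L * X + 1) * δ^β := by
          have : L * (X * δ^β) = (L * X) * δ^β := by ring
          rw [this]
          apply mul_le_mul_of_nonneg_right _ hδβ.le
          linarith
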